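/- Let σ, τ and ξ be three permutations of a finite set with k elements. Then c(σξ⁻¹) + c(ξτ) ≤ k + c(στ), where c(ρ) denotes the number of cycles of the permutation ρ. -/

import Mathlib

/-- The setoid on `α` whose classes are the cycles (orbits) of the permutation `σ`:
`x ≈ y` iff `y = σ^i x` for some integer `i`. -/
def Equiv.Perm.sameCycleSetoid {α : Type*} (σ : Equiv.Perm α) : Setoid α :=
  ⟨σ.SameCycle,
    ⟨fun x => Equiv.Perm.SameCycle.refl σ x, fun h => h.symm, fun h h' => h.trans h'⟩⟩

/-- The number of cycles of a permutation of a finite set: the number of orbits of the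
action of the cyclic group generated by it (fixed points count as cycles). -/
noncomputable def Equiv.Perm.cycleCount {α : Type*} (σ : Equiv.Perm α) : ℕ :=
  Nat.card (Quotient σ.sameCycleSetoid)

open Equiv

namespace CycleCountAux

variable {α : Type*} [DecidableEq α]

/-- On the forward orbit avoiding `a` and `b`, `swap a b * π` agrees with `π`. -/
lemma pow_swap_mul_eq {π : Equiv.Perm α} {a b x : α}
    (h : ∀ k : ℤ, (π ^ k) x ≠ a ∧ (π ^ k) x ≠ b) (n : ℕ) :
    ((swap a b * π) ^ n) x = (π ^ n) x := by
  induction n with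
  | zero => simp
  | succ n ih =>
    have hx : (π ^ (n + 1 : ℕ)) x ≠ a ∧ (π ^ (n + 1 : ℕ)) x ≠ b := by
      have := h (n + 1 : ℕ)
      rwa [zpow_natCast] at this
    rw [pow_succ', Equiv.Perm.mul_apply, ih, Equiv.Perm.mul_apply]
    have hpn : π ((π ^ n) x) = (π ^ (n + 1)) x := by
      rw [pow_succ', Equiv.Perm.mul_apply]
    rw [hpn, swap_apply_of_ne_of_ne hx.1 hx.2, pow_succ', Equiv.Perm.mul_apply, hpn]

lemma forall_zpow {π : Equiv.Perm α} {a b x : α}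
    (h1 : ¬ π.SameCycle x a) (h2 : ¬ π.SameCycle x b) :
    ∀ k : ℤ, (π ^ k) x ≠ a ∧ (π ^ k) x ≠ b :=
  fun k => ⟨fun hk => h1 ⟨k, hk⟩, fun hk => h2 ⟨k, hk⟩⟩

lemma sameCycle_swap_mul [Finite α] {π : Equiv.Perm α} {a b x y : α}
    (h1 : ¬ π.SameCycle x a) (h2 : ¬ π.SameCycle x b)
    (hxy : π.SameCycle x y) : (swap a b * π).SameCycle x y := by
  obtain ⟨i, _, hi⟩ := hxy.exists_pow_eq'
  exact ⟨i, by rw [zpow_natCast, pow_swap_mul_eq (forall_zpow h1 h2), hi]⟩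

lemma avoid_swap_mul [Finite α] {π : Equiv.Perm α} {a b x : α}
    (h1 : ¬ π.SameCycle x a) (h2 : ¬ π.SameCycle x b) :
    ¬ (swap a b * π).SameCycle x a ∧ ¬ (swap a b * π).SameCycle x b := by
  constructor <;> intro hc
  · obtain ⟨i, _, hi⟩ := hc.exists_pow_eq'
    rw [pow_swap_mul_eq (forall_zpow h1 h2)] at hi
    exact h1 ⟨i, by rw [zpow_natCast, hi]⟩
  · obtain ⟨i, _, hi⟩ := hc.exists_pow_eq'
    rw [pow_swap_mul_eq (forall_zpow h1 h2)] at hi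
    exact h2 ⟨i, by rw [zpow_natCast, hi]⟩

lemma mk_ne_iff {π : Equiv.Perm α} {x y : α} :
    Quotient.mk π.sameCycleSetoid x ≠ Quotient.mk π.sameCycleSetoid y ↔ ¬ π.SameCycle x y :=
  ⟨fun h hc => h (Quotient.sound hc), fun h hc => h (Quotient.exact hc)⟩

open scoped Classical in
/-- A (total) map between cycle quotients, the identity on classes avoiding `a, b`. -/
noncomputable def cShift [Finite α] (π : Equiv.Perm α) (a b : α) :
    Quotient π.sameCycleSetoid → Quotient (swap a b * π).sameCycleSetoid :=
  Quotient.lift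
    (fun x => if (¬ π.SameCycle x a ∧ ¬ π.SameCycle x b)
      then Quotient.mk _ x else Quotient.mk _ a)
    (by
      intro x y hxy
      have hxy' : π.SameCycle x y := hxy
      have hiff : (¬ π.SameCycle x a ∧ ¬ π.SameCycle x b) ↔
          (¬ π.SameCycle y a ∧ ¬ π.SameCycle y b) := by
        constructor <;> rintro ⟨h1, h2⟩
        · exact ⟨fun hc => h1 (hxy'.trans hc), fun hc => h2 (hxy'.trans hc)⟩
        · exact ⟨fun hc => h1 (hxy'.symm.trans hc), fun hc => h2 (hxy'.symm.trans hc)⟩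
      by_cases hav : ¬ π.SameCycle x a ∧ ¬ π.SameCycle x b
      · rw [if_pos hav, if_pos (hiff.mp hav)]
        exact Quotient.sound (sameCycle_swap_mul hav.1 hav.2 hxy')
      · rw [if_neg hav, if_neg (fun h => hav (hiff.mpr h))])

lemma cShift_mk [Finite α] {π : Equiv.Perm α} {a b x : α}
    (h1 : ¬ π.SameCycle x a) (h2 : ¬ π.SameCycle x b) :
    cShift π a b (Quotient.mk _ x) = Quotient.mk _ x := by
  classical
  show (if (¬ π.SameCycle x a ∧ ¬ π.SameCycle x b)
      then Quotient.mk (swap a b * π).sameCycleSetoid x else Quotient.mk _ a)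
    = Quotient.mk _ x
  rw [if_pos ⟨h1, h2⟩]

lemma ncard_le [Finite α] (π : Equiv.Perm α) (a b : α) :
    Nat.card {q : Quotient π.sameCycleSetoid //
        ¬ (q = Quotient.mk _ a ∨ q = Quotient.mk _ b)} ≤
    Nat.card {q : Quotient (swap a b * π).sameCycleSetoid //
        ¬ (q = Quotient.mk _ a ∨ q = Quotient.mk _ b)} := by
  refine Nat.card_le_card_of_injective (fun q => ⟨cShift π a b q.1, ?_⟩) ?_
  · obtain ⟨q, hq⟩ := q
    obtain ⟨x, rfl⟩ := q.exists_rep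
    push_neg at hq
    have h1 := mk_ne_iff.mp hq.1
    have h2 := mk_ne_iff.mp hq.2
    rw [cShift_mk h1 h2]
    have hav := avoid_swap_mul (a := a) (b := b) h1 h2
    push_neg
    exact ⟨mk_ne_iff.mpr hav.1, mk_ne_iff.mpr hav.2⟩
  · rintro ⟨q1, hq1⟩ ⟨q2, hq2⟩ h
    obtain ⟨x, rfl⟩ := q1.exists_rep
    obtain ⟨y, rfl⟩ := q2.exists_rep
    push_neg at hq1 hq2
    have hx1 := mk_ne_iff.mp hq1.1
    have hx2 := mk_ne_iff.mp hq1.2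
    have hy1 := mk_ne_iff.mp hq2.1
    have hy2 := mk_ne_iff.mp hq2.2
    simp only [Subtype.mk.injEq, cShift_mk hx1 hx2, cShift_mk hy1 hy2] at h ⊢
    have hsc : (swap a b * π).SameCycle x y := Quotient.exact h
    have havx := avoid_swap_mul (a := a) (b := b) hx1 hx2
    have hsc2 : (swap a b * (swap a b * π)).SameCycle x y :=
      sameCycle_swap_mul havx.1 havx.2 hsc
    rw [← mul_assoc, swap_mul_self, one_mul] at hsc2
    exact Quotient.sound hsc2

lemma ncard_eq [Finite α] (π : Equiv.Perm α) (a b : α) :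
    Nat.card {q : Quotient π.sameCycleSetoid //
        ¬ (q = Quotient.mk _ a ∨ q = Quotient.mk _ b)} =
    Nat.card {q : Quotient (swap a b * π).sameCycleSetoid //
        ¬ (q = Quotient.mk _ a ∨ q = Quotient.mk _ b)} := by
  refine le_antisymm (ncard_le π a b) ?_
  have h2 := ncard_le (swap a b * π) a b
  have hτ : swap a b * (swap a b * π) = π := by
    rw [← mul_assoc, swap_mul_self, one_mul]
  rw [hτ] at h2
  exact h2

/-- Decomposition of the cycle count into touched and untouched classes. -/
lemma cycleCount_eq_add [Finite α] (π : Equiv.Perm α) (a b : α) :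
    π.cycleCount =
      ({Quotient.mk π.sameCycleSetoid a, Quotient.mk π.sameCycleSetoid b} :
          Set (Quotient π.sameCycleSetoid)).ncard +
      Nat.card {q : Quotient π.sameCycleSetoid //
        ¬ (q = Quotient.mk _ a ∨ q = Quotient.mk _ b)} := by
  rw [Equiv.Perm.cycleCount,
    ← Set.ncard_add_ncard_compl
      ({Quotient.mk π.sameCycleSetoid a, Quotient.mk π.sameCycleSetoid b} :
        Set (Quotient π.sameCycleSetoid))]
  congr 1


lemma cycleCount_le_swap_mul [Finite α] (π : Equiv.Perm α) (a b : α) :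
    π.cycleCount ≤ (swap a b * π).cycleCount + 1 := by
  rw [cycleCount_eq_add π a b, cycleCount_eq_add (swap a b * π) a b, ← ncard_eq π a b]
  have h1 : ({Quotient.mk π.sameCycleSetoid a, Quotient.mk π.sameCycleSetoid b} :
      Set (Quotient π.sameCycleSetoid)).ncard ≤ 2 := by
    refine (Set.ncard_insert_le _ _).trans ?_
    simp
  have h2 : 0 < ({Quotient.mk (swap a b * π).sameCycleSetoid a,
      Quotient.mk (swap a b * π).sameCycleSetoid b} :
      Set (Quotient (swap a b * π).sameCycleSetoid)).ncard := by
    rw [Set.ncard_pos]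
    exact ⟨_, Set.mem_insert _ _⟩
  omega

lemma cycleCount_swap_mul_of_ne [Finite α] {π : Equiv.Perm α} {a : α} (ha : π a ≠ a) :
    π.cycleCount + 1 ≤ (swap a (π a) * π).cycleCount := by
  rw [cycleCount_eq_add π a (π a), cycleCount_eq_add (swap a (π a) * π) a (π a),
    ← ncard_eq π a (π a)]
  have h1 : ({Quotient.mk π.sameCycleSetoid a, Quotient.mk π.sameCycleSetoid (π a)} :
      Set (Quotient π.sameCycleSetoid)).ncard = 1 := by
    have : Quotient.mk π.sameCycleSetoid a = Quotient.mk π.sameCycleSetoid (π a) :=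
      Quotient.sound ⟨1, by simp⟩
    rw [← this, Set.pair_eq_singleton, Set.ncard_singleton]
  have h2 : ({Quotient.mk (swap a (π a) * π).sameCycleSetoid a,
      Quotient.mk (swap a (π a) * π).sameCycleSetoid (π a)} :
      Set (Quotient (swap a (π a) * π).sameCycleSetoid)).ncard = 2 := by
    refine Set.ncard_pair (mk_ne_iff.mpr ?_)
    intro hc
    have hfix : (swap a (π a) * π) a = a := by
      rw [Equiv.Perm.mul_apply, swap_apply_right]
    obtain ⟨i, _, hi⟩ := hc.exists_pow_eq'
    rw [Equiv.Perm.pow_apply_eq_self_of_apply_eq_self hfix] at hi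
    exact ha hi.symm
  omega

lemma cycleCount_inv (π : Equiv.Perm α) : π⁻¹.cycleCount = π.cycleCount := by
  have h : π⁻¹.sameCycleSetoid = π.sameCycleSetoid :=
    Setoid.ext fun x y => Equiv.Perm.sameCycle_inv
  rw [Equiv.Perm.cycleCount, Equiv.Perm.cycleCount, h]

lemma cycleCount_le_mul_swap [Finite α] (γ : Equiv.Perm α) (a b : α) :
    γ.cycleCount ≤ (γ * swap a b).cycleCount + 1 := by
  have hinv : (γ * swap a b)⁻¹ = swap a b * γ⁻¹ := by
    rw [mul_inv_rev, swap_inv]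
  calc γ.cycleCount = γ⁻¹.cycleCount := (cycleCount_inv γ).symm
    _ ≤ (swap a b * γ⁻¹).cycleCount + 1 := cycleCount_le_swap_mul γ⁻¹ a b
    _ = (γ * swap a b).cycleCount + 1 := by rw [← hinv, cycleCount_inv]

lemma cycleCount_le_card [Finite α] (π : Equiv.Perm α) : π.cycleCount ≤ Nat.card α :=
  Nat.card_le_card_of_surjective (Quotient.mk π.sameCycleSetoid) fun q => q.exists_rep

lemma exists_swap_list [Fintype α] (π : Equiv.Perm α) :
    ∃ l : List (Equiv.Perm α), (∀ g ∈ l, ∃ a b : α, g = swap a b) ∧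
      l.prod = π ∧ l.length + π.cycleCount ≤ Fintype.card α := by
  by_cases h1 : π = 1
  · refine ⟨[], by simp, by simp [h1], ?_⟩
    simpa using (cycleCount_le_card π).trans_eq Nat.card_eq_fintype_card
  · obtain ⟨a, ha⟩ : ∃ a, π a ≠ a := by
      by_contra h
      push_neg at h
      exact h1 (Equiv.ext h)
    obtain ⟨l, hl, hp, hlen⟩ := exists_swap_list (swap a (π a) * π)
    refine ⟨swap a (π a) :: l, ?_, ?_, ?_⟩
    · intro g hg
      rcases List.mem_cons.mp hg with rfl | hg'
      · exact ⟨a, π a, rfl⟩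
      · exact hl g hg'
    · rw [List.prod_cons, hp, ← mul_assoc, swap_mul_self, one_mul]
    · have hs := cycleCount_swap_mul_of_ne ha
      simp only [List.length_cons]
      omega
termination_by π.support.card
decreasing_by exact Equiv.Perm.card_support_swap_mul ha

lemma le_list [Finite α] (l : List (Equiv.Perm α))
    (hl : ∀ g ∈ l, ∃ a b : α, g = swap a b) (γ : Equiv.Perm α) :
    γ.cycleCount ≤ l.length + (γ * l.prod).cycleCount := by
  induction l generalizing γ with
  | nil => simp
  | cons g t ih =>
    obtain ⟨a, b, rfl⟩ := hl _ List.mem_cons_self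
    have h1 := cycleCount_le_mul_swap γ a b
    have h2 := ih (fun g hg => hl g (List.mem_cons_of_mem _ hg)) (γ * swap a b)
    rw [List.prod_cons, ← mul_assoc]
    simp only [List.length_cons]
    omega

end CycleCountAux

/-- **Generalized subadditivity of the cycle defect** (proof of Lemma
`permutationinequalitylemma`): for permutations `σ, τ, ξ` of a finite set with `k`
elements, `c(σ ξ⁻¹) + c(ξ τ) ≤ k + c(σ τ)`, where `c` is the number of cycles. -/
theorem cycleCount_mul_inv_add_cycleCount_mul_le {α : Type*} [Fintype α] (k : ℕ)
    (hk : Fintype.card α = k) (σ τ ξ : Equiv.Perm α) :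
    (σ * ξ⁻¹).cycleCount + (ξ * τ).cycleCount ≤ k + (σ * τ).cycleCount := by
  classical
  subst hk
  obtain ⟨l, hl, hp, hlen⟩ := CycleCountAux.exists_swap_list (ξ * τ)
  have h := CycleCountAux.le_list l hl (σ * ξ⁻¹)
  rw [hp] at h
  have hAB : σ * ξ⁻¹ * (ξ * τ) = σ * τ := by group
  rw [hAB] at h
  omega
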